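/- (Claim 3.1.) There is an absolute constant C > 0 such that for all parameters n, v, u satisfying the model hypotheses and every deterministic incremental retrieval scheme (F, G, Query), the random variables of the process satisfy H(G) + H((B, R_B) | (F, G)) ≥ H(B) + n·v − C·n. -/

import Mathlib

noncomputable section

namespace Retrieval

/-! ### Entropy on a finite sample space with the uniform distribution -/

/-- The probability of an event `s` under the uniform distribution on a finite type `Ω`. -/
def unifPr (Ω : Type*) [Fintype Ω] (s : Set Ω) : ℝ :=
  (Nat.card s : ℝ) / (Fintype.card Ω : ℝ)

/-- The Shannon entropy (in bits) of a random variable `X` defined on a finite sample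
space `Ω` carrying the uniform distribution. -/
def entropy {Ω : Type*} {α : Type*} [Fintype Ω] (X : Ω → α) : ℝ :=
  (∑ ω : Ω, -Real.logb 2 (unifPr Ω {ω' | X ω' = X ω})) / (Fintype.card Ω : ℝ)

/-- The conditional Shannon entropy `H(X | Y) = H(X, Y) − H(Y)` (in bits). -/
def condEntropy {Ω : Type*} {α β : Type*} [Fintype Ω] (X : Ω → α) (Y : Ω → β) : ℝ :=
  entropy (fun ω => (X ω, Y ω)) - entropy Y

/-- The first bit of a `v`-bit string. -/
def firstBit {v : ℕ} (r : Fin v → Bool) : Bool :=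
  if h : 0 < v then r ⟨0, h⟩ else false

/-! ### The incremental random process

Parameters `n v u`.  The universe `[u]` is split into `m = n − n/v` consecutive parts,
each of size `u/m`.  An element of the `i`-th part is identified by its position
`a ∈ Fin (u/m)` inside the part; as a natural number it is the key `i·(u/m) + a`. -/

variable (n v u : ℕ)

/-- `m = n − n/v`, the number of parts of the universe. -/
def M : ℕ := n - n / v

/-- `u/m`, the size of each part of the universe. -/
def W : ℕ := u / M n v

/-- The key (element of `[u]`, 0-indexed) at position `a` of part `i`. -/
def key (i : Fin (M n v)) (a : Fin (W n v u)) : ℕ := (i : ℕ) * W n v u + (a : ℕ)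

/-- The model hypotheses on the parameters: `2 ≤ v ≤ log₂ n`, `v ∣ n`,
`m = n − n/v` divides `u`, and `u ≥ n³`. -/
def Hyp : Prop :=
  2 ≤ v ∧ (v : ℝ) ≤ Real.logb 2 n ∧ v ∣ n ∧ M n v ∣ u ∧ n ^ 3 ≤ u

/-- Raw data of a realization of the incremental random process:
`((A, R_A), (P_B, B, R_B))`.  `A i` is the (position of the) element of `A` in part `i`
and `R_A i` its `v`-bit value; `P_B` is the set of parts from which `B` samples, `B i` the
element of `B` in part `i` (for `i ∈ P_B`; it is a canonical junk value `0` otherwise) and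
`R_B i` its value (a canonical junk value otherwise). -/
abbrev IncData : Type :=
  ((Fin (M n v) → Fin (W n v u)) × (Fin (M n v) → Fin v → Bool)) ×
    (Finset (Fin (M n v)) × (Fin (M n v) → Fin (W n v u)) × (Fin (M n v) → Fin v → Bool))

/-- Validity of a realization of `(A, R_A)`: every value has first bit `0`
(the set `A` itself is unconstrained). -/
def ValidAR (_A : Fin (M n v) → Fin (W n v u)) (RA : Fin (M n v) → Fin v → Bool) : Prop :=
  ∀ j, firstBit (RA j) = false

/-- Validity of a realization `(P_B, B)` given `A`: `|P_B| = n/v`, for `i ∈ P_B` the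
element `B i` avoids `A i`, and outside `P_B` the function `B` takes a canonical junk
value (so that `(P_B, B)` carries exactly the information of the indexed family
`(b_i)_{i ∈ P_B}`). -/
def ValidB (A : Fin (M n v) → Fin (W n v u)) (P : Finset (Fin (M n v)))
    (B : Fin (M n v) → Fin (W n v u)) : Prop :=
  P.card = n / v ∧ (∀ j ∈ P, B j ≠ A j) ∧ ∀ j ∉ P, (B j : ℕ) = 0

/-- Validity of a realization of `R_B` given `P_B`: for `i ∈ P_B` the value has first
bit `1`; outside `P_B` it is a canonical junk value. -/
def ValidRB (P : Finset (Fin (M n v))) (RB : Fin (M n v) → Fin v → Bool) : Prop :=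
  (∀ j ∈ P, firstBit (RB j) = true) ∧ ∀ j ∉ P, RB j = fun _ => false

/-- Validity of a full realization of the incremental process. -/
def IncValid (d : IncData n v u) : Prop :=
  ValidAR n v u d.1.1 d.1.2 ∧ ValidB n v u d.1.1 d.2.1 d.2.2.1 ∧ ValidRB n v d.2.1 d.2.2.2

/-- The sample space of the incremental random process: since every random choice in the
process is uniform (subject to the stated constraints, whose number of options does not
depend on the previous choices), the joint distribution of `(A, R_A, P_B, B, R_B)` is the
uniform distribution on the set of valid realizations. -/
abbrev IncOmega : Type := {d : IncData n v u // IncValid n v u d}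

noncomputable instance : Fintype (IncOmega n v u) := Fintype.ofFinite _

/-- The type of the (deterministic) map `F`, building a bit string from a realization of
`(A, R_A)`. -/
abbrev FBuilder : Type :=
  (Fin (M n v) → Fin (W n v u)) → (Fin (M n v) → Fin v → Bool) → List Bool

/-- The type of the (deterministic) map `G`, building a bit string from a bit string
together with a realization of `(B, R_B)` (given as `(P_B, B, R_B)`). -/
abbrev GBuilder : Type :=
  List Bool → Finset (Fin (M n v)) → (Fin (M n v) → Fin (W n v u)) →
    (Fin (M n v) → Fin v → Bool) → List Bool

/-- The type of the (deterministic) query map: a bit string and a key give a `v`-bit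
value. -/
abbrev QueryFn (v : ℕ) : Type := List Bool → ℕ → Fin v → Bool

/-- The random bit string `F = F(A, R_A)`. -/
def Frv (F : FBuilder n v u) (ω : IncOmega n v u) : List Bool := F ω.1.1.1 ω.1.1.2

/-- The random bit string `G = G(F(A, R_A), B, R_B)`. -/
def Grv (F : FBuilder n v u) (G : GBuilder n v u) (ω : IncOmega n v u) : List Bool :=
  G (Frv n v u F ω) ω.1.2.1 ω.1.2.2.1 ω.1.2.2.2

/-- The random variable `B` (together with the set of parts `P_B` it samples from). -/
def Brv (ω : IncOmega n v u) : Finset (Fin (M n v)) × (Fin (M n v) → Fin (W n v u)) :=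
  (ω.1.2.1, ω.1.2.2.1)

/-- The random variable `(B, R_B)`. -/
def BRrv (ω : IncOmega n v u) :
    Finset (Fin (M n v)) × (Fin (M n v) → Fin (W n v u)) × (Fin (M n v) → Fin v → Bool) :=
  ω.1.2

/-- Correctness of an incremental retrieval scheme `(F, G, Query)`: on every realization
in the support of the process, querying `F(A,R_A)` with a key of `A` returns its value,
and querying `G(F(A,R_A),B,R_B)` with a key of `A` or of `B` returns its value. -/
def Correct (F : FBuilder n v u) (G : GBuilder n v u) (Q : QueryFn v) : Prop :=
  ∀ ω : IncOmega n v u,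
    (∀ i, Q (Frv n v u F ω) (key n v u i (ω.1.1.1 i)) = ω.1.1.2 i) ∧
    (∀ i, Q (Grv n v u F G ω) (key n v u i (ω.1.1.1 i)) = ω.1.1.2 i) ∧
    (∀ i ∈ ω.1.2.1, Q (Grv n v u F G ω) (key n v u i (ω.1.2.2.1 i)) = ω.1.2.2.2 i)

/-- The plausible set `P_i(f)`: all pairs `(x, r)` of an element `x` of part `i` and a
`v`-bit value `r` with first bit `0` such that some realization `(A', R'_{A'})` in the
support of `(A, R_A)` has `F(A', R'_{A'}) = f`, `x` the element of `A'` in part `i`, and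
`r` its value. -/
def Plausible (F : FBuilder n v u) (f : List Bool) (i : Fin (M n v)) :
    Set (Fin (W n v u) × (Fin v → Bool)) :=
  {p | ∃ A' RA', ValidAR n v u A' RA' ∧ F A' RA' = f ∧ A' i = p.1 ∧ RA' i = p.2}

/-- A pair `(x, r) ∈ P_i(f)` *remains feasible after `B`* (given as `(P_B, B)`) if the
witness `(A', R'_{A'})` can additionally be chosen with `A' ∩ B = ∅`. -/
def Feasible (F : FBuilder n v u) (f : List Bool) (i : Fin (M n v))
    (P : Finset (Fin (M n v))) (B : Fin (M n v) → Fin (W n v u))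
    (p : Fin (W n v u) × (Fin v → Bool)) : Prop :=
  ∃ A' RA', ValidAR n v u A' RA' ∧ F A' RA' = f ∧ A' i = p.1 ∧ RA' i = p.2 ∧
    ∀ j ∈ P, B j ≠ A' j

section General
open Finset Real
variable {Ω α β γ : Type*} [Fintype Ω]

/-- fiber cardinality -/
def fcard (X : Ω → α) (ω : Ω) : ℕ := Nat.card {ω' | X ω' = X ω}

lemma fcard_eq_filter (X : Ω → α) (ω : Ω) [DecidablePred (fun ω' => X ω' = X ω)] :
    fcard X ω = (univ.filter (fun ω' => X ω' = X ω)).card := by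
  rw [fcard, Nat.card_coe_set_eq, Set.ncard_eq_toFinset_card', Set.toFinset_setOf]

lemma fcard_pos (X : Ω → α) (ω : Ω) : 0 < fcard X ω :=
  Nat.card_pos_iff.2 ⟨⟨⟨ω, rfl⟩⟩, Set.toFinite _⟩

lemma entropy_eq_sum (X : Ω → α) [Nonempty Ω] :
    entropy X = (∑ ω : Ω, (Real.logb 2 (Fintype.card Ω) - Real.logb 2 (fcard X ω)))
      / (Fintype.card Ω) := by
  unfold entropy
  congr 1
  refine Finset.sum_congr rfl fun ω _ => ?_
  have h1 : (0:ℝ) < fcard X ω := by exact_mod_cast fcard_pos X ω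
  have h2 : (0:ℝ) < Fintype.card Ω := by exact_mod_cast Fintype.card_pos
  rw [unifPr, Real.logb_div (by positivity) (by positivity)]
  show -(Real.logb 2 (fcard X ω) - _) = _
  ring

lemma entropy_congr {X : Ω → α} {Y : Ω → β}
    (h : ∀ ω ω', X ω = X ω' ↔ Y ω = Y ω') : entropy X = entropy Y := by
  unfold entropy
  congr 1
  refine Finset.sum_congr rfl fun ω _ => ?_
  have : {ω' | X ω' = X ω} = {ω' | Y ω' = Y ω} := by
    ext ω'; exact h ω' ω
  rw [this]

lemma entropy_injective (X : Ω → α) (hX : Function.Injective X) [Nonempty Ω] :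
    entropy X = Real.logb 2 (Fintype.card Ω) := by
  rw [entropy_eq_sum]
  have : ∀ ω : Ω, fcard X ω = 1 := by
    intro ω
    rw [fcard]
    have : {ω' | X ω' = X ω} = {ω} := by
      ext ω'; simp [hX.eq_iff]
    rw [this]; simp
  simp only [this]
  rw [Finset.sum_const, Finset.card_univ, nsmul_eq_mul]
  have h2 : (0:ℝ) < Fintype.card Ω := by exact_mod_cast Fintype.card_pos
  field_simp
  simp

lemma entropy_of_fcard_const (X : Ω → α) (k : ℕ) (hk : ∀ ω, fcard X ω = k) [Nonempty Ω] :
    entropy X = Real.logb 2 (Fintype.card Ω) - Real.logb 2 k := by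
  rw [entropy_eq_sum]
  simp only [hk]
  rw [Finset.sum_const, Finset.card_univ, nsmul_eq_mul]
  have h2 : (0:ℝ) < Fintype.card Ω := by exact_mod_cast Fintype.card_pos
  field_simp

lemma entropy_le_of_fcard_ge (X : Ω → α) (k : ℕ) (hk : 0 < k) (h : ∀ ω, k ≤ fcard X ω)
    [Nonempty Ω] :
    entropy X ≤ Real.logb 2 (Fintype.card Ω) - Real.logb 2 k := by
  rw [entropy_eq_sum]
  have h2 : (0:ℝ) < Fintype.card Ω := by exact_mod_cast Fintype.card_pos
  rw [div_le_iff₀ h2]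
  calc ∑ ω : Ω, (Real.logb 2 (Fintype.card Ω) - Real.logb 2 (fcard X ω))
      ≤ ∑ _ω : Ω, (Real.logb 2 (Fintype.card Ω) - Real.logb 2 k) := by
        refine Finset.sum_le_sum fun ω _ => ?_
        have := Real.logb_le_logb_of_le (by norm_num : (1:ℝ) < 2)
          (by exact_mod_cast hk : (0:ℝ) < k)
          (by exact_mod_cast h ω : (k:ℝ) ≤ fcard X ω)
        linarith
    _ = (Real.logb 2 (Fintype.card Ω) - Real.logb 2 k) * Fintype.card Ω := by
        rw [Finset.sum_const]; simp [mul_comm]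

lemma entropy_const (c : α) [Nonempty Ω] : entropy (fun _ : Ω => c) = 0 := by
  rw [entropy_of_fcard_const _ (Fintype.card Ω)]
  · ring
  · intro ω
    rw [fcard]
    have : {ω' : Ω | c = c} = Set.univ := by simp
    rw [this, Nat.card_eq_fintype_card, Fintype.card_congr (Equiv.Set.univ Ω)]

open scoped Classical in
private lemma sum_ratio_le [Nonempty Ω] (X : Ω → α) (Y : Ω → β) (ψ : β → γ) :
    ∑ ω : Ω,
      ((univ.filter fun ω' => Y ω' = Y ω).card : ℝ) *
        ((univ.filter fun ω' => X ω' = X ω ∧ ψ (Y ω') = ψ (Y ω)).card : ℝ) /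
        (((univ.filter fun ω' => X ω' = X ω ∧ Y ω' = Y ω).card : ℝ) *
          ((univ.filter fun ω' => ψ (Y ω') = ψ (Y ω)).card : ℝ))
      ≤ (Fintype.card Ω : ℝ) := by
  set a : Ω → ℝ := fun ω => ((univ.filter fun ω' => X ω' = X ω ∧ Y ω' = Y ω).card : ℝ) with ha
  set b : Ω → ℝ := fun ω => ((univ.filter fun ω' => Y ω' = Y ω).card : ℝ) with hb
  set c : Ω → ℝ := fun ω =>
    ((univ.filter fun ω' => X ω' = X ω ∧ ψ (Y ω') = ψ (Y ω)).card : ℝ) with hc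
  set d : Ω → ℝ := fun ω => ((univ.filter fun ω' => ψ (Y ω') = ψ (Y ω)).card : ℝ) with hd
  -- Step 1: unfold c as a sum over ω₁
  have step1 : ∀ ω : Ω, b ω * c ω / (a ω * d ω) =
      ∑ ω₁ : Ω, if X ω₁ = X ω ∧ ψ (Y ω₁) = ψ (Y ω) then b ω / (a ω * d ω) else 0 := by
    intro ω
    rw [← Finset.sum_filter, Finset.sum_const, nsmul_eq_mul]
    simp only [hc]
    ring
  calc ∑ ω : Ω, b ω * c ω / (a ω * d ω)
      = ∑ ω₁ : Ω, ∑ ω : Ω,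
          (if X ω₁ = X ω ∧ ψ (Y ω₁) = ψ (Y ω) then b ω / (a ω * d ω) else 0) := by
        rw [Finset.sum_comm]
        exact Finset.sum_congr rfl fun ω _ => step1 ω
    _ ≤ ∑ _ω₁ : Ω, (1 : ℝ) := by
        refine Finset.sum_le_sum fun ω₁ _ => ?_
        -- inner bound for fixed ω₁
        have hb' : ∀ ω : Ω, b ω = ∑ ω₂ : Ω, if Y ω₂ = Y ω then (1:ℝ) else 0 := by
          intro ω
          rw [Finset.sum_boole, hb]
        have expand : ∀ ω : Ω,
            (if X ω₁ = X ω ∧ ψ (Y ω₁) = ψ (Y ω) then b ω / (a ω * d ω) else 0) =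
            ∑ ω₂ : Ω, if (X ω₁ = X ω ∧ ψ (Y ω₁) = ψ (Y ω)) ∧ Y ω₂ = Y ω then
              1 / (a ω * d ω) else 0 := by
          intro ω
          by_cases h : X ω₁ = X ω ∧ ψ (Y ω₁) = ψ (Y ω)
          · simp only [if_pos h]
            have : ∀ ω₂ : Ω, (if (X ω₁ = X ω ∧ ψ (Y ω₁) = ψ (Y ω)) ∧ Y ω₂ = Y ω then
                (1:ℝ) / (a ω * d ω) else 0) =
                (if Y ω₂ = Y ω then (1:ℝ) else 0) * (1 / (a ω * d ω)) := by
              intro ω₂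
              by_cases h2 : Y ω₂ = Y ω
              · rw [if_pos ⟨h, h2⟩, if_pos h2, one_mul]
              · rw [if_neg (fun hh => h2 hh.2), if_neg h2, zero_mul]
            rw [Finset.sum_congr rfl fun ω₂ _ => this ω₂, ← Finset.sum_mul, ← hb' ω]
            ring
          · rw [if_neg h]
            refine (Finset.sum_eq_zero fun ω₂ _ => ?_).symm
            rw [if_neg (fun hh => h hh.1)]
        rw [Finset.sum_congr rfl fun ω _ => expand ω, Finset.sum_comm]
        have hd1pos : (0:ℝ) < d ω₁ := by
          simp only [hd]
          have : 0 < (univ.filter fun ω' => ψ (Y ω') = ψ (Y ω₁)).card :=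
            Finset.card_pos.2 ⟨ω₁, Finset.mem_filter.2 ⟨Finset.mem_univ _, rfl⟩⟩
          exact_mod_cast this
        have inner2 : ∀ ω₂ : Ω,
            (∑ ω : Ω, if (X ω₁ = X ω ∧ ψ (Y ω₁) = ψ (Y ω)) ∧ Y ω₂ = Y ω then
              1 / (a ω * d ω) else 0) ≤
            (if ψ (Y ω₂) = ψ (Y ω₁) then 1 / d ω₁ else 0) := by
          intro ω₂
          by_cases hψ : ψ (Y ω₂) = ψ (Y ω₁)
          · rw [if_pos hψ]
            set α₀ : ℝ := ((univ.filter fun ω' => X ω' = X ω₁ ∧ Y ω' = Y ω₂).card : ℝ)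
              with hα
            have hterm : ∀ ω : Ω,
                (if (X ω₁ = X ω ∧ ψ (Y ω₁) = ψ (Y ω)) ∧ Y ω₂ = Y ω then
                  (1:ℝ) / (a ω * d ω) else 0) =
                (if X ω = X ω₁ ∧ Y ω = Y ω₂ then (1:ℝ) / (α₀ * d ω₁) else 0) := by
              intro ω
              by_cases h : X ω = X ω₁ ∧ Y ω = Y ω₂
              · have hcond : (X ω₁ = X ω ∧ ψ (Y ω₁) = ψ (Y ω)) ∧ Y ω₂ = Y ω :=
                  ⟨⟨h.1.symm, by rw [h.2, hψ]⟩, h.2.symm⟩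
                rw [if_pos h, if_pos hcond]
                have haω : a ω = α₀ := by simp only [ha, hα, h.1, h.2]
                have hdω : d ω = d ω₁ := by
                  have hyy : ψ (Y ω) = ψ (Y ω₁) := by rw [h.2, hψ]
                  simp only [hd, hyy]
                rw [haω, hdω]
              · have hcond : ¬ ((X ω₁ = X ω ∧ ψ (Y ω₁) = ψ (Y ω)) ∧ Y ω₂ = Y ω) := by
                  intro hh
                  exact h ⟨hh.1.1.symm, hh.2.symm⟩
                rw [if_neg h, if_neg hcond]
            rw [Finset.sum_congr rfl fun ω _ => hterm ω]
            rw [← Finset.sum_filter, Finset.sum_const, nsmul_eq_mul, ← hα]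
            rcases eq_or_ne α₀ 0 with h0 | h0
            · rw [h0, zero_mul]
              exact le_of_lt (by exact one_div_pos.2 hd1pos)
            · rw [one_div, mul_inv, ← mul_assoc, mul_inv_cancel₀ h0, one_mul, one_div]
          · rw [if_neg hψ]
            refine le_of_eq (Finset.sum_eq_zero fun ω _ => ?_)
            rw [if_neg]
            intro hh
            exact hψ (by rw [hh.2, ← hh.1.2])
        calc ∑ ω₂ : Ω, (∑ ω : Ω, if (X ω₁ = X ω ∧ ψ (Y ω₁) = ψ (Y ω)) ∧ Y ω₂ = Y ω then
              1 / (a ω * d ω) else 0)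
            ≤ ∑ ω₂ : Ω, (if ψ (Y ω₂) = ψ (Y ω₁) then 1 / d ω₁ else 0) :=
              Finset.sum_le_sum fun ω₂ _ => inner2 ω₂
          _ = d ω₁ * (1 / d ω₁) := by
              rw [← Finset.sum_filter, Finset.sum_const, nsmul_eq_mul, hd]
          _ = 1 := by field_simp
    _ = (Fintype.card Ω : ℝ) := by simp

open scoped Classical in
lemma fcard_pair (X : Ω → α) (Y : Ω → β) (ω : Ω) :
    fcard (fun ω' => (X ω', Y ω')) ω =
      (univ.filter fun ω' => X ω' = X ω ∧ Y ω' = Y ω).card := by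
  rw [fcard_eq_filter]
  congr 1
  apply Finset.filter_congr
  intro ω' _
  simp [Prod.ext_iff]

open scoped Classical in
lemma condEntropy_eq_sum (X : Ω → α) (Y : Ω → β) [Nonempty Ω] :
    condEntropy X Y = (∑ ω : Ω,
      (Real.logb 2 ((univ.filter fun ω' => Y ω' = Y ω).card) -
        Real.logb 2 ((univ.filter fun ω' => X ω' = X ω ∧ Y ω' = Y ω).card)))
      / (Fintype.card Ω : ℝ) := by
  unfold condEntropy
  rw [entropy_eq_sum, entropy_eq_sum, ← sub_div, ← Finset.sum_sub_distrib]
  congr 1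
  refine Finset.sum_congr rfl fun ω _ => ?_
  rw [fcard_pair X Y ω, fcard_eq_filter]
  ring

set_option maxHeartbeats 1000000 in
open scoped Classical in
lemma condEntropy_comp_le (X : Ω → α) (Y : Ω → β) (ψ : β → γ) [Nonempty Ω] :
    condEntropy X Y ≤ condEntropy X (fun ω => ψ (Y ω)) := by
  rw [condEntropy_eq_sum, condEntropy_eq_sum]
  have hN : (0:ℝ) < Fintype.card Ω := by exact_mod_cast Fintype.card_pos
  refine div_le_div_of_nonneg_right ?_ hN.le
  -- now: sum inequality
  set a : Ω → ℝ := fun ω => ((univ.filter fun ω' => X ω' = X ω ∧ Y ω' = Y ω).card : ℝ) with ha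
  set b : Ω → ℝ := fun ω => ((univ.filter fun ω' => Y ω' = Y ω).card : ℝ) with hb
  set c : Ω → ℝ := fun ω =>
    ((univ.filter fun ω' => X ω' = X ω ∧ ψ (Y ω') = ψ (Y ω)).card : ℝ) with hc
  set d : Ω → ℝ := fun ω => ((univ.filter fun ω' => ψ (Y ω') = ψ (Y ω)).card : ℝ) with hd
  have hmem : ∀ (p : Ω → Prop) (inst : DecidablePred p) (ω : Ω), p ω →
      (1:ℝ) ≤ (((@Finset.filter Ω p inst univ).card : ℕ) : ℝ) := by
    intro p inst ω hp
    have : 0 < (@Finset.filter Ω p inst univ).card :=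
      Finset.card_pos.2 ⟨ω, Finset.mem_filter.2 ⟨Finset.mem_univ _, hp⟩⟩
    exact_mod_cast this
  have hA : ∀ ω, (1:ℝ) ≤ a ω := by
    intro ω; simp only [ha]
    exact hmem _ _ ω ⟨rfl, rfl⟩
  have hB : ∀ ω, (1:ℝ) ≤ b ω := by
    intro ω; simp only [hb]
    exact hmem _ _ ω rfl
  have hC : ∀ ω, (1:ℝ) ≤ c ω := by
    intro ω; simp only [hc]
    exact hmem _ _ ω ⟨rfl, rfl⟩
  have hD : ∀ ω, (1:ℝ) ≤ d ω := by
    intro ω; simp only [hd]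
    exact hmem _ _ ω rfl
  have hlog2 : (0:ℝ) < Real.log 2 := Real.log_pos (by norm_num)
  have key : ∑ ω : Ω, Real.log (b ω * c ω / (a ω * d ω)) ≤ 0 := by
    have h1 : ∀ ω : Ω, Real.log (b ω * c ω / (a ω * d ω)) ≤
        b ω * c ω / (a ω * d ω) - 1 := fun ω =>
      Real.log_le_sub_one_of_pos (by
        have := hA ω; have := hB ω; have := hC ω; have := hD ω; positivity)
    calc ∑ ω : Ω, Real.log (b ω * c ω / (a ω * d ω))
        ≤ ∑ ω : Ω, (b ω * c ω / (a ω * d ω) - 1) := Finset.sum_le_sum fun ω _ => h1 ω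
      _ = (∑ ω : Ω, b ω * c ω / (a ω * d ω)) - Fintype.card Ω := by
          rw [Finset.sum_sub_distrib, Finset.sum_const]; simp
      _ ≤ 0 := by
          have := sum_ratio_le X Y ψ
          replace this : ∑ ω : Ω, b ω * c ω / (a ω * d ω) ≤ (Fintype.card Ω : ℝ) := this
          linarith
  have hsplit : ∀ ω : Ω, Real.logb 2 (b ω) - Real.logb 2 (a ω) -
      (Real.logb 2 (d ω) - Real.logb 2 (c ω)) =
      Real.log (b ω * c ω / (a ω * d ω)) / Real.log 2 := by
    intro ω
    have h1 : a ω ≠ 0 := by have := hA ω; linarith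
    have h2 : b ω ≠ 0 := by have := hB ω; linarith
    have h3 : c ω ≠ 0 := by have := hC ω; linarith
    have h4 : d ω ≠ 0 := by have := hD ω; linarith
    rw [Real.log_div (by positivity) (by positivity), Real.log_mul h2 h3,
      Real.log_mul h1 h4]
    simp only [Real.logb]
    ring
  rw [← sub_nonneg, ← Finset.sum_sub_distrib]
  have heq : ∑ ω : Ω, ((Real.logb 2 (d ω) - Real.logb 2 (c ω)) -
      (Real.logb 2 (b ω) - Real.logb 2 (a ω))) =
      -((∑ ω : Ω, Real.log (b ω * c ω / (a ω * d ω))) / Real.log 2) := by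
    have hpt : ∀ ω : Ω, ((Real.logb 2 (d ω) - Real.logb 2 (c ω)) -
        (Real.logb 2 (b ω) - Real.logb 2 (a ω))) =
        -(Real.log (b ω * c ω / (a ω * d ω)) / Real.log 2) := fun ω => by
      linarith [hsplit ω]
    rw [Finset.sum_congr rfl fun ω _ => hpt ω, Finset.sum_neg_distrib, ← Finset.sum_div]
  rw [heq]
  have : (∑ ω : Ω, Real.log (b ω * c ω / (a ω * d ω))) / Real.log 2 ≤ 0 :=
    div_nonpos_of_nonpos_of_nonneg key hlog2.le
  linarith

lemma condEntropy_le_entropy (X : Ω → α) (Y : Ω → β) [Nonempty Ω] :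
    condEntropy X Y ≤ entropy X := by
  refine le_trans (condEntropy_comp_le X Y (fun _ => ())) (le_of_eq ?_)
  have h1 : entropy (fun ω : Ω => (X ω, ())) = entropy X :=
    entropy_congr (fun ω ω' => by simp [Prod.ext_iff])
  have h2 : entropy (fun _ : Ω => ()) = 0 := entropy_const ()
  show entropy (fun ω : Ω => (X ω, ())) - entropy (fun _ : Ω => ()) = entropy X
  rw [h1, h2]
  ring

end General

end Retrieval

namespace Retrieval


section ModelLemmas
open Finset Real

variable {n v u : ℕ}

lemma nat_card_pi_subtype {ι : Type*} [Fintype ι] {κ : ι → Type*} (p : ∀ i, κ i → Prop) :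
    Nat.card {f : ∀ i, κ i // ∀ i, p i (f i)} = ∏ i, Nat.card {x : κ i // p i x} := by
  rw [Nat.card_congr (Equiv.subtypePiEquivPi (p := p)), Nat.card_pi]

private lemma card_firstBit (hv : 0 < v) (bl : Bool) :
    Nat.card {r : Fin v → Bool // firstBit r = bl} = 2 ^ (v - 1) := by
  have hfb : ∀ r : Fin v → Bool, firstBit r = r ⟨0, hv⟩ := fun r => by
    unfold firstBit; rw [dif_pos hv]
  have e : {r : Fin v → Bool // firstBit r = bl} ≃ ({j : Fin v // j ≠ ⟨0, hv⟩} → Bool) := by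
    refine ⟨fun r j => r.1 j.1,
      fun g => ⟨fun j => if h : j = ⟨0, hv⟩ then bl else g ⟨j, h⟩, by rw [hfb, dif_pos rfl]⟩,
      fun r => ?_, fun g => ?_⟩
    · apply Subtype.ext
      funext j
      by_cases h : j = (⟨0, hv⟩ : Fin v)
      · have h2 := r.2
        rw [hfb] at h2
        simp only [dif_pos h]
        rw [h]
        exact h2.symm
      · simp only [dif_neg h]
    · funext j
      simp only [dif_neg j.2]
  rw [Nat.card_congr e, Nat.card_fun]
  simp [Nat.card_eq_fintype_card, Fintype.card_subtype_compl]

private lemma card_validAR (n v u : ℕ) (hv : 0 < v) :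
    Nat.card {RA : Fin (M n v) → (Fin v → Bool) // ∀ j, firstBit (RA j) = false}
      = (2 ^ (v - 1)) ^ (M n v) := by
  rw [nat_card_pi_subtype (fun _ r => firstBit r = false)]
  rw [Finset.prod_const, card_firstBit hv, Finset.card_univ, Fintype.card_fin]

private lemma card_avoid (n v u : ℕ) (P : Finset (Fin (M n v)))
    (b : Fin (M n v) → Fin (W n v u)) :
    Nat.card {A' : Fin (M n v) → Fin (W n v u) // ∀ j, j ∈ P → A' j ≠ b j}
      = (W n v u - 1) ^ P.card * (W n v u) ^ (M n v - P.card) := by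
  classical
  rw [nat_card_pi_subtype (fun j x => j ∈ P → x ≠ b j)]
  have hpt : ∀ j, Nat.card {x : Fin (W n v u) // j ∈ P → x ≠ b j}
      = if j ∈ P then W n v u - 1 else W n v u := by
    intro j
    by_cases hj : j ∈ P
    · rw [if_pos hj, Nat.card_congr (Equiv.subtypeEquivRight
        (q := fun x => x ≠ b j) (fun x => by simp [hj]))]
      simp [Nat.card_eq_fintype_card, Fintype.card_subtype_compl]
    · rw [if_neg hj, Nat.card_congr (Equiv.subtypeUnivEquiv (fun x h => absurd h hj))]
      simp [Nat.card_eq_fintype_card]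
  rw [Finset.prod_congr rfl (fun j _ => hpt j), Finset.prod_ite, Finset.prod_const,
    Finset.prod_const]
  have h1 : Finset.univ.filter (fun j => j ∈ P) = P := Finset.filter_univ_mem P
  have h2 : (Finset.univ.filter (fun j => ¬ j ∈ P)).card = M n v - P.card := by
    rw [Finset.filter_not, Finset.card_sdiff_of_subset (Finset.filter_subset _ _), h1]
    simp
  rw [h1, h2]

private lemma card_validRB (n v : ℕ) (hv : 0 < v) (P : Finset (Fin (M n v))) :
    Nat.card {RB : Fin (M n v) → (Fin v → Bool) // ValidRB n v P RB}
      = (2 ^ (v - 1)) ^ P.card := by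
  classical
  rw [Nat.card_congr (Equiv.subtypeEquivRight
    (q := fun RB : Fin (M n v) → (Fin v → Bool) => ∀ j,
      (j ∈ P → firstBit (RB j) = true) ∧ (j ∉ P → RB j = fun _ => false))
    (fun RB => ⟨fun h j => ⟨fun hj => h.1 j hj, fun hj => h.2 j hj⟩,
      fun h => ⟨fun j hj => (h j).1 hj, fun j hj => (h j).2 hj⟩⟩))]
  rw [nat_card_pi_subtype
    (fun j r => (j ∈ P → firstBit r = true) ∧ (j ∉ P → r = fun _ => false))]
  have hpt : ∀ j, Nat.card {r : Fin v → Bool //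
      (j ∈ P → firstBit r = true) ∧ (j ∉ P → r = fun _ => false)}
      = if j ∈ P then 2 ^ (v - 1) else 1 := by
    intro j
    by_cases hj : j ∈ P
    · rw [if_pos hj, Nat.card_congr (Equiv.subtypeEquivRight
        (q := fun r => firstBit r = true) (fun r => by simp [hj])),
        card_firstBit hv]
    · rw [if_neg hj, Nat.card_congr (Equiv.subtypeEquivRight
        (q := fun r => r = fun _ => false) (fun r => by simp [hj]))]
      simp [Nat.card_eq_fintype_card]
  rw [Finset.prod_congr rfl (fun j _ => hpt j), Finset.prod_ite, Finset.prod_const,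
    Finset.prod_const, Finset.filter_univ_mem, one_pow, mul_one]

/-- transport between `A`-fibers -/
private def swapD (n v u : ℕ) (a a' : Fin (M n v) → Fin (W n v u)) (d : IncData n v u) :
    IncData n v u :=
  ((a', d.1.2), (d.2.1,
    fun j => if j ∈ d.2.1 then Equiv.swap (a j) (a' j) (d.2.2.1 j) else d.2.2.1 j,
    d.2.2.2))

private lemma swapD_valid (a a' : Fin (M n v) → Fin (W n v u)) (d : IncData n v u)
    (hd : IncValid n v u d) (hA : d.1.1 = a) : IncValid n v u (swapD n v u a a' d) := by
  obtain ⟨hAR, ⟨hcard, havoid, hjunk⟩, hRB⟩ := hd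
  refine ⟨hAR, ⟨hcard, ?_, ?_⟩, hRB⟩
  · intro j hj
    have hj' : j ∈ d.2.1 := hj
    show (if j ∈ d.2.1 then Equiv.swap (a j) (a' j) (d.2.2.1 j) else d.2.2.1 j) ≠ a' j
    rw [if_pos hj']
    intro hcontra
    have h2 : d.2.2.1 j = a j := by
      have h3 := congrArg (Equiv.swap (a j) (a' j)) hcontra
      rwa [Equiv.swap_apply_self, Equiv.swap_apply_right] at h3
    exact havoid j hj (by rw [h2, hA])
  · intro j hj
    show (((if j ∈ d.2.1 then Equiv.swap (a j) (a' j) (d.2.2.1 j) else d.2.2.1 j) :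
      Fin (W n v u)) : ℕ) = 0
    have hj' : j ∉ d.2.1 := hj
    rw [if_neg hj']
    exact hjunk j hj'

private lemma swapD_swapD (a a' : Fin (M n v) → Fin (W n v u)) (d : IncData n v u)
    (hA : d.1.1 = a) : swapD n v u a' a (swapD n v u a a' d) = d := by
  obtain ⟨⟨A, RA⟩, P, B, RB⟩ := d
  have hA' : A = a := hA
  subst hA'
  simp only [swapD]
  refine Prod.ext rfl (Prod.ext rfl (Prod.ext ?_ rfl))
  funext j
  by_cases hj : j ∈ P
  · simp only [if_pos hj]
    rw [Equiv.swap_comm, Equiv.swap_apply_self]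
  · simp only [if_neg hj]

private lemma card_A_fiber (a a' : Fin (M n v) → Fin (W n v u)) :
    Nat.card {ω : IncOmega n v u // ω.1.1.1 = a} =
      Nat.card {ω : IncOmega n v u // ω.1.1.1 = a'} := by
  refine Nat.card_congr
    ⟨fun e => ⟨⟨swapD n v u a a' e.1.1, swapD_valid a a' e.1.1 e.1.2 e.2⟩, rfl⟩,
     fun e => ⟨⟨swapD n v u a' a e.1.1, swapD_valid a' a e.1.1 e.1.2 e.2⟩, rfl⟩,
     ?_, ?_⟩
  · intro e
    apply Subtype.ext
    apply Subtype.ext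
    exact swapD_swapD a a' e.1.1 e.2
  · intro e
    apply Subtype.ext
    apply Subtype.ext
    exact swapD_swapD a' a e.1.1 e.2

private lemma card_B_fiber_ge (hv : 0 < v) (ω : IncOmega n v u) :
    ((W n v u - 1) ^ ω.1.2.1.card * (W n v u) ^ (M n v - ω.1.2.1.card)) *
      ((2 ^ (v - 1)) ^ (M n v) * (2 ^ (v - 1)) ^ ω.1.2.1.card)
      ≤ Nat.card {ω' : IncOmega n v u // Brv n v u ω' = Brv n v u ω} := by
  classical
  have hvalid := ω.2
  have hcount : Nat.card ({A' : Fin (M n v) → Fin (W n v u) // ∀ j, j ∈ ω.1.2.1 → A' j ≠ ω.1.2.2.1 j} ×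
      ({RA' : Fin (M n v) → (Fin v → Bool) // ∀ j, firstBit (RA' j) = false} ×
       {RB' : Fin (M n v) → (Fin v → Bool) // ValidRB n v ω.1.2.1 RB'})) =
      ((W n v u - 1) ^ ω.1.2.1.card * (W n v u) ^ (M n v - ω.1.2.1.card)) *
        ((2 ^ (v - 1)) ^ (M n v) * (2 ^ (v - 1)) ^ ω.1.2.1.card) := by
    rw [Nat.card_prod, Nat.card_prod, card_avoid, card_validAR n v u hv,
      card_validRB n v hv]
  rw [← hcount]
  refine Nat.card_le_card_of_injective
    (fun t => ⟨⟨((t.1.1, t.2.1.1), (ω.1.2.1, ω.1.2.2.1, t.2.2.1)),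
      ⟨t.2.1.2, ⟨hvalid.2.1.1, fun j hj => (t.1.2 j hj).symm, hvalid.2.1.2.2⟩,
        t.2.2.2⟩⟩, rfl⟩) ?_
  intro t t' h
  have h1 : t.1.1 = t'.1.1 := congrArg (fun (x : {ω' : IncOmega n v u // Brv n v u ω' = Brv n v u ω}) => x.1.1.1.1) h
  have h2 : t.2.1.1 = t'.2.1.1 := congrArg (fun (x : {ω' : IncOmega n v u // Brv n v u ω' = Brv n v u ω}) => x.1.1.1.2) h
  have h3 : t.2.2.1 = t'.2.2.1 := congrArg (fun (x : {ω' : IncOmega n v u // Brv n v u ω' = Brv n v u ω}) => x.1.1.2.2.2) h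
  exact Prod.ext (Subtype.ext h1) (Prod.ext (Subtype.ext h2) (Subtype.ext h3))

end ModelLemmas

/-- **Claim 3.1.** There is an absolute constant `C > 0` such that for all parameters
`n, v, u` satisfying the model hypotheses and every deterministic incremental retrieval
scheme `(F, G, Query)`, the random variables of the process satisfy
`H(G) + H((B, R_B) | (F, G)) ≥ H(B) + n·v − C·n`. -/
theorem protocol_entropy_bound :
    ∃ C : ℝ, 0 < C ∧ ∀ n v u : ℕ, Hyp n v u →
      ∀ (F : FBuilder n v u) (G : GBuilder n v u) (Q : QueryFn v),
        Correct n v u F G Q →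
        entropy (Brv n v u) + (n : ℝ) * v - C * n ≤
          entropy (Grv n v u F G) +
            condEntropy (BRrv n v u) (fun ω => (Frv n v u F ω, Grv n v u F G ω)) := by
  refine ⟨2, by norm_num, ?_⟩
  intro n v u hyp F G Q hQC
  classical
  obtain ⟨hv2, hvlog, hvdvd, hmdvd, hu3⟩ := hyp
  have hv0 : 0 < v := by omega
  have hn2 : 2 ≤ n := by
    rcases Nat.lt_or_ge n 2 with h | h
    · exfalso
      have hle : Real.logb 2 n ≤ 0 := by
        have h1 : (n : ℝ) ≤ 1 := by exact_mod_cast Nat.lt_succ_iff.mp h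
        exact Real.logb_nonpos (by norm_num) (by positivity) h1
      have h2 : (2 : ℝ) ≤ Real.logb 2 n := le_trans (by exact_mod_cast hv2) hvlog
      linarith
    · exact h
  have hMval : M n v = n - n / v := rfl
  have hq2 : n / v ≤ n / 2 := Nat.div_le_div_left hv2 (by norm_num)
  have hqn : n / v ≤ n := Nat.div_le_self n v
  have h2q : n / v + n / v ≤ n := by
    have h := hq2
    omega
  have hm1 : 1 ≤ M n v := by
    rw [hMval]
    have hlt : n / v < n := lt_of_le_of_lt hq2 (Nat.div_lt_self (by omega) (by norm_num))
    exact Nat.sub_pos_of_lt hlt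
  have hqm : n / v ≤ M n v := by
    rw [hMval]
    exact Nat.le_sub_of_add_le h2q
  have hmq : M n v + n / v = n := by
    rw [hMval]
    exact Nat.sub_add_cancel hqn
  have hmn : M n v ≤ n := by
    rw [hMval]
    exact Nat.sub_le n _
  have hW2 : 2 ≤ W n v u := by
    have h1 : n ^ 3 / n ≤ u / M n v := le_trans (Nat.div_le_div_left hmn hm1)
      (Nat.div_le_div_right hu3)
    have h2 : n ^ 3 / n = n ^ 2 := by
      rw [pow_succ, Nat.mul_div_cancel _ (by omega : 0 < n)]
    have h3 : 4 ≤ n ^ 2 := by nlinarith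
    have h5 : 4 ≤ u / M n v := le_trans h3 (h2 ▸ h1)
    have h4 : W n v u = u / M n v := rfl
    rw [h4]
    exact le_trans (by norm_num) h5
  set q : ℕ := n / v with hqdef
  set m : ℕ := M n v with hmdef
  have hW0 : 0 < W n v u := by omega
  have hW1 : 1 < W n v u := by omega
  -- nonempty sample space
  obtain ⟨P₀, -, hP₀⟩ := Finset.exists_subset_card_eq
    (s := (Finset.univ : Finset (Fin (M n v)))) (n := q) (by simpa using hqm)
  have hω₀ : IncOmega n v u := by
    refine ⟨((fun _ => ⟨0, hW0⟩, fun _ _ => false),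
      (P₀, fun j => if j ∈ P₀ then ⟨1, hW1⟩ else ⟨0, hW0⟩,
        fun j => if j ∈ P₀ then (fun _ => true) else (fun _ => false))), ?_, ⟨?_, ?_, ?_⟩, ?_, ?_⟩
    · intro j
      unfold firstBit
      split <;> rfl
    · exact hP₀
    · intro j hj
      have hj' : j ∈ P₀ := hj
      show (if j ∈ P₀ then (⟨1, hW1⟩ : Fin (W n v u)) else ⟨0, hW0⟩) ≠ ⟨0, hW0⟩
      rw [if_pos hj']
      simp [Fin.ext_iff]
    · intro j hj
      have hj' : j ∉ P₀ := hj
      show (((if j ∈ P₀ then (⟨1, hW1⟩ : Fin (W n v u)) else ⟨0, hW0⟩) : Fin (W n v u)) : ℕ) = 0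
      rw [if_neg hj']
    · intro j hj
      have hj' : j ∈ P₀ := hj
      show firstBit (if j ∈ P₀ then (fun _ => true) else (fun _ => false)) = true
      rw [if_pos hj']
      unfold firstBit
      rw [dif_pos hv0]
    · intro j hj
      have hj' : j ∉ P₀ := hj
      show (if j ∈ P₀ then (fun _ => true) else (fun _ => false)) = (fun _ : Fin v => false)
      rw [if_neg hj']
  haveI hNE : Nonempty (IncOmega n v u) := ⟨hω₀⟩
  -- the constant fiber size of A
  set kA : ℕ := Nat.card {ω' : IncOmega n v u // ω'.1.1.1 = hω₀.1.1.1} with hkAdef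
  have hfA : ∀ ω : IncOmega n v u, fcard (fun x : IncOmega n v u => x.1.1.1) ω = kA := by
    intro ω
    rw [hkAdef]
    exact card_A_fiber (ω.1.1.1) (hω₀.1.1.1)
  have hkA1 : 0 < kA := by
    rw [hkAdef]
    haveI : Nonempty {ω' : IncOmega n v u // ω'.1.1.1 = hω₀.1.1.1} := ⟨⟨hω₀, rfl⟩⟩
    exact Nat.card_pos
  have hNkA : Fintype.card (IncOmega n v u) = (W n v u) ^ m * kA := by
    rw [← Finset.card_univ,
      Finset.card_eq_sum_card_fiberwise
        (f := fun x : IncOmega n v u => x.1.1.1) (t := Finset.univ)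
        (fun x _ => Finset.mem_univ _)]
    have hfib : ∀ a : Fin (M n v) → Fin (W n v u),
        (Finset.univ.filter fun x : IncOmega n v u => x.1.1.1 = a).card = kA := by
      intro a
      have h1 : (Finset.univ.filter fun x : IncOmega n v u => x.1.1.1 = a).card
          = Nat.card {x : IncOmega n v u // x.1.1.1 = a} := by
        rw [Nat.card_eq_fintype_card, Fintype.card_subtype]
      rw [h1, hkAdef]
      exact card_A_fiber a (hω₀.1.1.1)
    rw [Finset.sum_congr rfl fun a _ => hfib a, Finset.sum_const, smul_eq_mul,
      Finset.card_univ]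
    congr 1
    simp [← hmdef]
  -- B fiber lower bound
  set KB : ℕ := ((W n v u - 1) ^ q * (W n v u) ^ (m - q)) *
    ((2 ^ (v - 1)) ^ m * (2 ^ (v - 1)) ^ q) with hKBdef
  have hKB1 : 0 < KB := by
    have c1 : 0 < W n v u - 1 := by omega
    have c2 : 0 < (2:ℕ) ^ (v - 1) := Nat.pow_pos (by norm_num)
    exact Nat.mul_pos (Nat.mul_pos (Nat.pow_pos c1) (Nat.pow_pos hW0))
      (Nat.mul_pos (Nat.pow_pos c2) (Nat.pow_pos c2))
  have hfB : ∀ ω : IncOmega n v u, KB ≤ fcard (Brv n v u) ω := by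
    intro ω
    have h := card_B_fiber_ge (n := n) (v := v) (u := u) hv0 ω
    have hPcard : ω.1.2.1.card = q := ω.2.2.1.1
    rw [hPcard] at h
    exact h
  -- entropy computations
  have hHA : entropy (fun x : IncOmega n v u => x.1.1.1)
      = Real.logb 2 (Fintype.card (IncOmega n v u)) - Real.logb 2 kA :=
    entropy_of_fcard_const _ kA hfA
  have hHB : entropy (Brv n v u)
      ≤ Real.logb 2 (Fintype.card (IncOmega n v u)) - Real.logb 2 KB :=
    entropy_le_of_fcard_ge _ KB hKB1 hfB
  -- chain of (in)equalities
  have s1 : condEntropy (BRrv n v u) (fun ω => (ω.1.1, Grv n v u F G ω)) ≤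
      condEntropy (BRrv n v u) (fun ω => (Frv n v u F ω, Grv n v u F G ω)) :=
    condEntropy_comp_le (BRrv n v u) (fun ω => (ω.1.1, Grv n v u F G ω))
      (fun p => (F p.1.1 p.1.2, p.2))
  have hinj : Function.Injective
      (fun ω : IncOmega n v u => (BRrv n v u ω, (ω.1.1, Grv n v u F G ω))) := by
    intro ω ω' h
    have h1 : BRrv n v u ω = BRrv n v u ω' := congrArg Prod.fst h
    have h2 : ω.1.1 = ω'.1.1 := congrArg (fun p => p.2.1) h
    exact Subtype.ext (Prod.ext h2 h1)
  have s2 : entropy (fun ω : IncOmega n v u => (BRrv n v u ω, (ω.1.1, Grv n v u F G ω)))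
      = Real.logb 2 (Fintype.card (IncOmega n v u)) :=
    entropy_injective _ hinj
  have s3 : entropy (fun ω : IncOmega n v u => (ω.1.1, Grv n v u F G ω)) =
      entropy (fun ω : IncOmega n v u => (ω.1.1.1, Grv n v u F G ω)) := by
    apply entropy_congr
    intro ω ω'
    constructor
    · intro h
      have hA : ω.1.1.1 = ω'.1.1.1 := congrArg (fun p => p.1.1) h
      have hG : Grv n v u F G ω = Grv n v u F G ω' := congrArg (fun p => p.2) h
      exact Prod.ext hA hG
    · intro h
      have hA : ω.1.1.1 = ω'.1.1.1 := congrArg (fun p => p.1) h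
      have hG : Grv n v u F G ω = Grv n v u F G ω' := congrArg (fun p => p.2) h
      refine Prod.ext (Prod.ext hA ?_) hG
      funext i
      have e1 := (hQC ω).2.1 i
      have e2 := (hQC ω').2.1 i
      rw [← e1, ← e2, hG, hA]
  have s4 : condEntropy (BRrv n v u) (fun ω => (ω.1.1, Grv n v u F G ω)) =
      entropy (fun ω : IncOmega n v u => (BRrv n v u ω, (ω.1.1, Grv n v u F G ω))) -
        entropy (fun ω : IncOmega n v u => (ω.1.1, Grv n v u F G ω)) := rfl
  have s5 : condEntropy (fun x : IncOmega n v u => x.1.1.1) (Grv n v u F G) =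
      entropy (fun ω : IncOmega n v u => (ω.1.1.1, Grv n v u F G ω)) -
        entropy (Grv n v u F G) := rfl
  have s6 : condEntropy (fun x : IncOmega n v u => x.1.1.1) (Grv n v u F G) ≤
      entropy (fun x : IncOmega n v u => x.1.1.1) :=
    condEntropy_le_entropy _ _
  -- real-number arithmetic
  have hWR : (2 : ℝ) ≤ (W n v u : ℝ) := by exact_mod_cast hW2
  have hW1R : ((W n v u - 1 : ℕ) : ℝ) = (W n v u : ℝ) - 1 := by
    push_cast [Nat.cast_sub (by omega : 1 ≤ W n v u)]
    ring
  have hkAR : (0 : ℝ) < (kA : ℝ) := by exact_mod_cast hkA1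
  have hlogN : Real.logb 2 (Fintype.card (IncOmega n v u)) =
      (m : ℝ) * Real.logb 2 (W n v u) + Real.logb 2 kA := by
    rw [hNkA]
    push_cast
    rw [Real.logb_mul (by positivity) (by positivity), Real.logb_pow]
  have hlogKB : Real.logb 2 KB =
      (q : ℝ) * Real.logb 2 ((W n v u : ℝ) - 1) +
      ((m : ℝ) - (q : ℝ)) * Real.logb 2 (W n v u) +
      (((v : ℝ) - 1) * m + ((v : ℝ) - 1) * q) := by
    rw [hKBdef]
    have hc1 : (0 : ℝ) < ((W n v u - 1 : ℕ) : ℝ) := by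
      rw [hW1R]; linarith
    have hc2 : (0 : ℝ) < ((2 : ℕ) : ℝ) ^ (v - 1) := by positivity
    have hcast1 : ((m - q : ℕ) : ℝ) = (m : ℝ) - q := by
      push_cast [Nat.cast_sub hqm]; ring
    have hcast2 : ((v - 1 : ℕ) : ℝ) = (v : ℝ) - 1 := by
      push_cast [Nat.cast_sub (by omega : 1 ≤ v)]; ring
    have hE : Real.logb 2 ((2 : ℝ) ^ (v - 1)) = (v : ℝ) - 1 := by
      rw [Real.logb_pow, Real.logb_self_eq_one (by norm_num), mul_one, hcast2]
    push_cast
    rw [Real.logb_mul (by rw [← hW1R] at *; positivity) (by positivity),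
      Real.logb_mul (by rw [← hW1R] at *; positivity) (by positivity),
      Real.logb_mul (by positivity) (by positivity)]
    simp only [Real.logb_pow]
    rw [Real.logb_self_eq_one (by norm_num : (1:ℝ) < 2)]
    rw [hcast1, hcast2, hW1R]
    ring
  have hstep : (q : ℝ) * (Real.logb 2 (W n v u) - Real.logb 2 ((W n v u : ℝ) - 1)) ≤ n := by
    have hW1pos : (0 : ℝ) < (W n v u : ℝ) - 1 := by linarith
    have h1 : Real.logb 2 (W n v u) ≤ 1 + Real.logb 2 ((W n v u : ℝ) - 1) := by
      have h2 : (W n v u : ℝ) ≤ 2 * ((W n v u : ℝ) - 1) := by linarith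
      calc Real.logb 2 (W n v u)
          ≤ Real.logb 2 (2 * ((W n v u : ℝ) - 1)) :=
            Real.logb_le_logb_of_le (by norm_num) (by linarith) h2
        _ = 1 + Real.logb 2 ((W n v u : ℝ) - 1) := by
            rw [Real.logb_mul (by norm_num) (ne_of_gt hW1pos),
              Real.logb_self_eq_one (by norm_num)]
    have h3 : (q : ℝ) * (Real.logb 2 (W n v u) - Real.logb 2 ((W n v u : ℝ) - 1))
        ≤ (q : ℝ) * 1 :=
      mul_le_mul_of_nonneg_left (by linarith) (by positivity)
    have h4 : (q : ℝ) ≤ n := by exact_mod_cast hqn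
    linarith
  have hmqR : (m : ℝ) + (q : ℝ) = (n : ℝ) := by exact_mod_cast hmq
  have hv1n : ((v : ℝ) - 1) * m + ((v : ℝ) - 1) * q = (n : ℝ) * v - n := by
    linear_combination ((v : ℝ) - 1) * hmqR
  have main1 : Real.logb 2 (kA : ℝ) ≤
      entropy (Grv n v u F G) +
        condEntropy (BRrv n v u) (fun ω => (Frv n v u F ω, Grv n v u F G ω)) := by
    linarith [s1, s2, s3, s4, s5, s6, hHA, hlogN]
  have main2 : entropy (Brv n v u) + (n : ℝ) * v - 2 * n ≤ Real.logb 2 (kA : ℝ) := by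
    have hfinal : (m : ℝ) * Real.logb 2 (W n v u) - Real.logb 2 KB +
        ((n : ℝ) * v - 2 * n) ≤ 0 := by
      rw [hlogKB]
      linarith [hstep, hv1n]
    linarith [hHB, hlogN, hfinal]
  linarith [main1, main2]

end Retrieval
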